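/- arXiv:1501.07904 — 5 statements merged into one kernel-verified Lean document; each statement's English description precedes it below -/
import Mathlib

section
/- There exist universal constants B > 0 and M > 0 such that the following holds. Let X be a δ-hyperbolic space with δ > 0, let p, q ∈ X, set D = d(p,q), fix a geodesic segment [p,q], and choose points p', q' on [p,q] with d(p,p') = d(p',q') = d(q',q) = D/3. Let R > 0 and let γ be a path from p to q in X whose image is disjoint from the closed R-neighborhood of the sub-segment of [p,q] between p' and q'. If R/δ ≥ M and D/δ ≥ M, then ℓ(γ) ≥ D · B · 2^{R/δ}. -/
/-- A geodesic segment between `a` and `b`: the image of an isometric embedding of the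
real interval `[0, dist a b]` sending the endpoints to `a` and `b`. -/
def IsGeodesicSegment {X : Type*} [MetricSpace X] (a b : X) (s : Set X) : Prop :=
  ∃ f : ℝ → X, f 0 = a ∧ f (dist a b) = b ∧
    (∀ u ∈ Set.Icc (0 : ℝ) (dist a b), ∀ v ∈ Set.Icc (0 : ℝ) (dist a b),
      dist (f u) (f v) = |u - v|) ∧
    s = f '' Set.Icc (0 : ℝ) (dist a b)

/-- A geodesic metric space: every pair of points is joined by a geodesic segment. -/
def GeodesicSpace (X : Type*) [MetricSpace X] : Prop :=
  ∀ a b : X, ∃ s : Set X, IsGeodesicSegment a b s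

/-- A geodesic triangle with sides `s₁, s₂, s₃` is `δ`-thin if each side is contained in
the closed `δ`-neighborhood of the union of the other two sides. -/
def ThinTriangle {X : Type*} [MetricSpace X] (δ : ℝ) (s₁ s₂ s₃ : Set X) : Prop :=
  (∀ p ∈ s₁, ∃ q ∈ s₂ ∪ s₃, dist p q ≤ δ) ∧
  (∀ p ∈ s₂, ∃ q ∈ s₁ ∪ s₃, dist p q ≤ δ) ∧
  (∀ p ∈ s₃, ∃ q ∈ s₁ ∪ s₂, dist p q ≤ δ)

/-- A `δ`-hyperbolic space: a geodesic metric space in which every geodesic triangle is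
`δ`-thin. -/
def IsHyperbolicSpace (X : Type*) [MetricSpace X] (δ : ℝ) : Prop :=
  GeodesicSpace X ∧
  ∀ (x y z : X) (sxy sxz syz : Set X),
    IsGeodesicSegment x y sxy → IsGeodesicSegment x z sxz → IsGeodesicSegment y z syz →
    ThinTriangle δ sxy sxz syz

namespace LPL

variable {X : Type*} [MetricSpace X] {δ : ℝ}


variable {X : Type*} [MetricSpace X]

theorem reverse {a b : X} {s : Set X} (h : IsGeodesicSegment a b s) :
    IsGeodesicSegment b a s := by
  obtain ⟨f, h0, hD, hiso, rfl⟩ := h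
  have hD' : dist b a = dist a b := dist_comm b a
  refine ⟨fun t => f (dist a b - t), by simpa [hD'] using hD, by simpa [hD'], ?_, ?_⟩
  · intro u hu v hv
    rw [hD'] at hu hv
    rw [hiso _ ⟨by linarith [hu.2], by linarith [hu.1]⟩ _ ⟨by linarith [hv.2], by linarith [hv.1]⟩]
    rw [abs_sub_comm]
    ring_nf
  · rw [hD']
    ext x
    constructor
    · rintro ⟨t, ht, rfl⟩
      exact ⟨dist a b - t, ⟨by linarith [ht.2], by linarith [ht.1]⟩, by ring_nf⟩
    · rintro ⟨t, ht, rfl⟩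
      exact ⟨dist a b - t, ⟨by linarith [ht.2], by linarith [ht.1]⟩, by ring_nf⟩

theorem exists_param {a b : X} {s : Set X} (h : IsGeodesicSegment a b s) {v : X} (hv : v ∈ s) :
    dist a v + dist v b = dist a b ∧ dist a v ≤ dist a b := by
  obtain ⟨f, h0, hD, hiso, rfl⟩ := h
  obtain ⟨t, ht, rfl⟩ := hv
  have hD0 : (0:ℝ) ≤ dist a b := dist_nonneg
  have h1 : dist a (f t) = t := by
    rw [← h0, hiso _ ⟨le_refl _, hD0⟩ _ ht, abs_sub_comm, sub_zero, abs_of_nonneg ht.1]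
  have h2 : dist (f t) b = dist a b - t := by
    have h' := hiso t ht (dist a b) ⟨hD0, le_rfl⟩
    rw [hD] at h'
    rw [h', abs_of_nonpos (by linarith [ht.2])]
    ring
  constructor
  · rw [h1, h2]; ring
  · rw [h1]; exact ht.2

/-- Gromov product clearance: any point on a geodesic from `a` to `b` is at distance at least
`(dist a w + dist b w - dist a b)/2` from `w`. -/
theorem clearance {a b : X} {s : Set X} (h : IsGeodesicSegment a b s) {v : X} (hv : v ∈ s)
    (w : X) : (dist a w + dist b w - dist a b) / 2 ≤ dist v w := by
  obtain ⟨hsum, -⟩ := exists_param h hv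
  have h1 : dist a w ≤ dist a v + dist v w := dist_triangle a v w
  have h2 : dist b w ≤ dist b v + dist v w := dist_triangle b v w
  have := dist_comm b v
  nlinarith [dist_nonneg (x := v) (y := w)]

theorem dist_le_of_mem {a b : X} {s : Set X} (h : IsGeodesicSegment a b s) {v : X} (hv : v ∈ s) :
    dist a v ≤ dist a b := (exists_param h hv).2


/-- The dyadic bisection lemma: if `w` lies on a geodesic joining `z 0` to `z (2^N)`, then
`w` is within `N * δ` of a point on a geodesic joining two consecutive points of `z`. -/
theorem bisect (seg : X → X → Set X) (hseg : ∀ a b, IsGeodesicSegment a b (seg a b))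
    (hthin : ∀ (x y z : X) (sxy sxz syz : Set X),
      IsGeodesicSegment x y sxy → IsGeodesicSegment x z sxz → IsGeodesicSegment y z syz →
      ThinTriangle δ sxy sxz syz) :
    ∀ (N : ℕ) (z : ℕ → X) (s : Set X), IsGeodesicSegment (z 0) (z (2 ^ N)) s →
      ∀ w ∈ s, ∃ k < 2 ^ N, ∃ s' , IsGeodesicSegment (z k) (z (k + 1)) s' ∧
        ∃ v ∈ s', dist w v ≤ N * δ := by
  intro N
  induction N with
  | zero =>
    intro z s hs w hw
    exact ⟨0, by norm_num, s, hs, w, hw, by simp⟩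
  | succ N ih =>
    intro z s hs w hw
    have hmid := hseg (z 0) (z (2 ^ N))
    have hmid' := hseg (z (2 ^ (N + 1))) (z (2 ^ N))
    have hthin1 := (hthin (z 0) (z (2 ^ (N + 1))) (z (2 ^ N)) s _ _ hs hmid hmid').1
    obtain ⟨v, hv, hwv⟩ := hthin1 w hw
    rcases hv with hv | hv
    · obtain ⟨k, hk, s', hs', v', hv', hd⟩ := ih z _ hmid v hv
      refine ⟨k, lt_of_lt_of_le hk (Nat.pow_le_pow_right (by norm_num) (Nat.le_succ N)), s', hs', v', hv', ?_⟩
      · calc dist w v' ≤ dist w v + dist v v' := dist_triangle _ _ _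
          _ ≤ δ + N * δ := add_le_add hwv hd
          _ = (N + 1 : ℕ) * δ := by push_cast; ring
    · have hrev : IsGeodesicSegment (z (2 ^ N)) (z (2 ^ (N + 1))) (seg (z (2 ^ (N+1))) (z (2 ^ N))) :=
        reverse (hmid')
      have h2 : (2:ℕ) ^ (N+1) = 2 ^ N + 2 ^ N := by rw [pow_succ]; ring
      have hrev' : IsGeodesicSegment ((fun j => z (2 ^ N + j)) 0) ((fun j => z (2 ^ N + j)) (2 ^ N))
          (seg (z (2 ^ (N+1))) (z (2 ^ N))) := by
        simpa [h2] using hrev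
      obtain ⟨k, hk, s', hs', v', hv', hd⟩ := ih (fun j => z (2 ^ N + j)) _ hrev' v hv
      have h2' : (2:ℕ) ^ (N+1) = 2 ^ N + 2 ^ N := by rw [pow_succ]; ring
      refine ⟨2 ^ N + k, by rw [h2']; omega, s', ?_, v', hv', ?_⟩
      · simpa [Nat.add_assoc] using hs'
      · calc dist w v' ≤ dist w v + dist v v' := dist_triangle _ _ _
          _ ≤ δ + N * δ := add_le_add hwv hd
          _ = (N + 1 : ℕ) * δ := by push_cast; ring


theorem piece_lower_bound
    (seg : X → X → Set X) (hseg : ∀ a b, IsGeodesicSegment a b (seg a b))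
    (hthin : ∀ (x y z : X) (sxy sxz syz : Set X),
      IsGeodesicSegment x y sxy → IsGeodesicSegment x z sxz → IsGeodesicSegment y z syz →
      ThinTriangle δ sxy sxz syz)
    {γ : ℝ → X} {α β : ℝ} (hαβ : α ≤ β) (hγ : ContinuousOn γ (Set.Icc α β))
    {w : X} {R : ℝ} (hδ : 0 < δ) (hR : 4 * δ ≤ R)
    (hfar : ∀ s ∈ Set.Icc α β, R < dist (γ s) w)
    (hseed : ∃ v ∈ seg (γ α) (γ β), dist w v ≤ 2 * δ) :
    ENNReal.ofReal (δ * (2:ℝ) ^ (R / δ - 4)) ≤ eVariationOn γ (Set.Icc α β) := by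
  classical
  by_cases hE : eVariationOn γ (Set.Icc α β) = ⊤
  · rw [hE]; exact le_top
  set E := eVariationOn γ (Set.Icc α β) with hEdef
  set L : ℝ := E.toReal with hLdef
  set T : ℝ → Set ℝ := fun t => {s : ℝ | s ∈ Set.Icc t β ∧ δ ≤ dist (γ s) (γ t)} with hT
  have hTmem : ∀ t s, s ∈ T t ↔ (s ∈ Set.Icc t β ∧ δ ≤ dist (γ s) (γ t)) := by
    intro t s; rw [hT]; rfl
  obtain ⟨u, hu0, husucc⟩ : ∃ u : ℕ → ℝ, u 0 = α ∧
      ∀ n, u (n+1) = (if _ : (T (u n)).Nonempty then sInf (T (u n)) else β) := by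
    refine ⟨fun n => Nat.rec (motive := fun _ => ℝ) α
      (fun _ t => if _ : (T t).Nonempty then sInf (T t) else β) n, rfl, fun n => rfl⟩
  have hTbdd : ∀ t, BddBelow (T t) := by
    intro t
    exact ⟨t, fun x hx => ((hTmem t x).1 hx).1.1⟩
  have hInf_mem_Icc : ∀ t, t ≤ β → (T t).Nonempty → sInf (T t) ∈ Set.Icc t β := by
    intro t ht h
    obtain ⟨x, hx⟩ := h
    have hx' := (hTmem t x).1 hx
    exact ⟨le_csInf ⟨x, hx⟩ (fun y hy => ((hTmem t y).1 hy).1.1),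
      csInf_le_of_le (hTbdd t) hx hx'.1.2⟩
  have humem : ∀ n, u n ∈ Set.Icc α β := by
    intro n
    induction n with
    | zero => rw [hu0]; exact ⟨le_refl _, hαβ⟩
    | succ n ih =>
      rw [husucc]
      by_cases h : (T (u n)).Nonempty
      · rw [dif_pos h]
        have := hInf_mem_Icc (u n) ih.2 h
        exact ⟨le_trans ih.1 this.1, this.2⟩
      · rw [dif_neg h]; exact ⟨hαβ, le_refl _⟩
  have humono : Monotone u := by
    apply monotone_nat_of_le_succ
    intro n
    rw [husucc]
    by_cases h : (T (u n)).Nonempty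
    · rw [dif_pos h]; exact (hInf_mem_Icc (u n) (humem n).2 h).1
    · rw [dif_neg h]; exact (humem n).2
  have hcont : ∀ t, ContinuousOn (fun s => dist (γ s) (γ t)) (Set.Icc α β) :=
    fun t => (continuous_id.dist continuous_const).comp_continuousOn hγ
  -- gap upper bounds
  have hgap_le : ∀ n, dist (γ (u (n+1))) (γ (u n)) ≤ δ := by
    intro n
    rw [husucc]
    by_cases h : (T (u n)).Nonempty
    · rw [dif_pos h]
      have hσmem : sInf (T (u n)) ∈ Set.Icc (u n) β := hInf_mem_Icc (u n) (humem n).2 h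
      set σ := sInf (T (u n)) with hσ
      have hσab : σ ∈ Set.Icc α β := ⟨le_trans (humem n).1 hσmem.1, hσmem.2⟩
      rcases eq_or_lt_of_le hσmem.1 with heq | hlt
      · rw [← heq, dist_self]; exact le_of_lt hδ
      · by_contra hgt
        push_neg at hgt
        have hc : ContinuousWithinAt (fun s => dist (γ s) (γ (u n))) (Set.Icc α β) σ :=
          (hcont (u n)).continuousWithinAt hσab
        rw [Metric.continuousWithinAt_iff] at hc
        obtain ⟨η, hη, hball⟩ := hc (dist (γ σ) (γ (u n)) - δ) (by linarith)
        set s' := max (u n) (σ - η / 2) with hs'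
        have hs'lt : s' < σ := by
          apply max_lt hlt; linarith
        have hs'mem : s' ∈ Set.Icc α β := by
          constructor
          · exact le_trans (humem n).1 (le_max_left _ _)
          · exact le_trans (le_of_lt hs'lt) hσmem.2
        have hclose : dist s' σ < η := by
          rw [Real.dist_eq, abs_of_nonpos (by linarith)]
          have : σ - η / 2 ≤ s' := le_max_right _ _
          linarith
        have hb := hball hs'mem hclose
        rw [Real.dist_eq] at hb
        have hgs' : δ < dist (γ s') (γ (u n)) := by
          cases' abs_lt.1 hb with h1 h2
          linarith
        have hmem' : s' ∈ T (u n) := (hTmem _ _).2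
          ⟨⟨le_max_left _ _, le_trans (le_of_lt hs'lt) hσmem.2⟩, le_of_lt hgs'⟩
        have := csInf_le (hTbdd _) hmem'
        rw [← hσ] at this
        linarith
    · rw [dif_neg h]
      rw [Set.not_nonempty_iff_eq_empty] at h
      have hβmem : β ∈ Set.Icc (u n) β := ⟨(humem n).2, le_refl _⟩
      by_contra hgt
      push_neg at hgt
      have : β ∈ T (u n) := (hTmem _ _).2 ⟨hβmem, le_of_lt hgt⟩
      rw [h] at this
      exact this
  -- gap lower bounds in the nonempty case
  have hgap_ge : ∀ n, (T (u n)).Nonempty → δ ≤ dist (γ (u (n+1))) (γ (u n)) := by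
    intro n h
    rw [husucc, dif_pos h]
    have hσmem : sInf (T (u n)) ∈ Set.Icc (u n) β := hInf_mem_Icc (u n) (humem n).2 h
    set σ := sInf (T (u n)) with hσ
    have hσab : σ ∈ Set.Icc α β := ⟨le_trans (humem n).1 hσmem.1, hσmem.2⟩
    by_contra hlt
    push_neg at hlt
    have hc : ContinuousWithinAt (fun s => dist (γ s) (γ (u n))) (Set.Icc α β) σ :=
      (hcont (u n)).continuousWithinAt hσab
    rw [Metric.continuousWithinAt_iff] at hc
    obtain ⟨η, hη, hball⟩ := hc (δ - dist (γ σ) (γ (u n))) (by linarith)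
    obtain ⟨x, hx, hxlt⟩ := exists_lt_of_csInf_lt h (show sInf (T (u n)) < σ + η by
      rw [← hσ]; linarith)
    have hx' := (hTmem _ _).1 hx
    have hxmem : x ∈ Set.Icc α β := ⟨le_trans (humem n).1 hx'.1.1, hx'.1.2⟩
    have hxσ : σ ≤ x := by rw [hσ]; exact csInf_le (hTbdd _) hx
    have hclose : dist x σ < η := by
      rw [Real.dist_eq, abs_of_nonneg (by linarith)]
      linarith
    have hb := hball hxmem hclose
    rw [Real.dist_eq] at hb
    cases' abs_lt.1 hb with h1 h2
    linarith [hx'.2]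
  -- once at β, stay at β
  have hustay : ∀ n, u n = β → u (n + 1) = β := by
    intro n hn
    rw [husucc]
    by_cases h : (T (u n)).Nonempty
    · rw [dif_pos h]
      obtain ⟨x, hx⟩ := h
      have hx' := (hTmem _ _).1 hx
      have hxβ : x = β := le_antisymm hx'.1.2 (by rw [← hn]; exact hx'.1.1)
      rw [hxβ, hn, dist_self] at hx'
      linarith [hx'.2]
    · rw [dif_neg h]
  -- counting: partial sums of gaps bound the variation
  have hsum : ∀ m : ℕ, (∀ i, i < m → (T (u i)).Nonempty) → ENNReal.ofReal ((m:ℝ) * δ) ≤ E := by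
    intro m hm
    have h1 : ∑ i ∈ Finset.range m, edist (γ (u (i+1))) (γ (u i)) ≤ E :=
      eVariationOn.sum_le (f := γ) (n := m) humono humem
    have h2 : (m : ENNReal) * ENNReal.ofReal δ ≤
        ∑ i ∈ Finset.range m, edist (γ (u (i+1))) (γ (u i)) := by
      calc (m : ENNReal) * ENNReal.ofReal δ
          = ∑ _i ∈ Finset.range m, ENNReal.ofReal δ := by
            rw [Finset.sum_const, Finset.card_range, nsmul_eq_mul]
        _ ≤ ∑ i ∈ Finset.range m, edist (γ (u (i+1))) (γ (u i)) := by
            apply Finset.sum_le_sum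
            intro i hi
            rw [edist_dist]
            exact ENNReal.ofReal_le_ofReal (hgap_ge i (hm i (Finset.mem_range.1 hi)))
    calc ENNReal.ofReal ((m:ℝ) * δ) = (m : ENNReal) * ENNReal.ofReal δ := by
          rw [ENNReal.ofReal_mul (by positivity), ENNReal.ofReal_natCast]
      _ ≤ _ := le_trans h2 h1
  -- there is an index where the greedy procedure stops
  have hstop : ∃ i, ¬ (T (u i)).Nonempty := by
    by_contra hall
    push_neg at hall
    obtain ⟨m, hm⟩ := exists_nat_gt (L / δ)
    have := hsum m (fun i _ => hall i)
    rw [ENNReal.ofReal_le_iff_le_toReal hE] at this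
    rw [← hLdef] at this
    have : L / δ < m := hm
    have hLm : L < m * δ := by
      rw [div_lt_iff₀ hδ] at hm
      linarith
    linarith [hsum m (fun i _ => hall i), (ENNReal.ofReal_le_iff_le_toReal hE).1
      (hsum m (fun i _ => hall i))]
  set i₀ := Nat.find hstop with hi₀def
  have hi₀ : ¬ (T (u i₀)).Nonempty := Nat.find_spec hstop
  have hi₀min : ∀ i, i < i₀ → (T (u i)).Nonempty := by
    intro i hi
    by_contra hcon
    exact absurd (Nat.find_le hcon) (not_le.2 hi)
  have hβ1 : u (i₀ + 1) = β := by rw [husucc, dif_neg hi₀]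
  have hconst : ∀ k, i₀ + 1 ≤ k → u k = β := by
    intro k hk
    induction k with
    | zero => omega
    | succ k ih =>
      rcases Nat.lt_or_ge (i₀ + 1) (k + 1) with h | h
      · exact hustay k (ih (by omega))
      · have : i₀ + 1 = k + 1 := le_antisymm hk h
        rw [← this]; exact hβ1
  have hLge : (i₀ : ℝ) * δ ≤ L := by
    exact (ENNReal.ofReal_le_iff_le_toReal hE).1 (hsum i₀ hi₀min)
  -- choose the dyadic depth
  have hNex : ∃ N : ℕ, i₀ + 1 ≤ 2 ^ N := ⟨i₀ + 1, le_of_lt Nat.lt_two_pow_self⟩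
  set N := Nat.find hNex with hNdef
  have hNspec : i₀ + 1 ≤ 2 ^ N := Nat.find_spec hNex
  -- apply the bisection lemma
  obtain ⟨v₀, hv₀mem, hv₀⟩ := hseed
  have htop : IsGeodesicSegment (γ (u 0)) (γ (u (2 ^ N))) (seg (γ α) (γ β)) := by
    rw [hu0, hconst _ hNspec]
    exact hseg _ _
  obtain ⟨k, hk, s', hs', v, hv, hdv⟩ :=
    bisect seg hseg hthin N (fun j => γ (u j)) (seg (γ α) (γ β)) htop v₀ hv₀mem
  have hfar' : R < dist (γ (u k)) w := hfar (u k) (humem k)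
  have hvk : dist (γ (u k)) v ≤ δ := le_trans (dist_le_of_mem hs' hv) (by
    rw [dist_comm (γ (u k)) (γ (u (k+1)))] at *
    exact hgap_le k)
  have hRlt : R < ((N : ℝ) + 3) * δ := by
    have : dist (γ (u k)) w ≤ dist (γ (u k)) v + dist v v₀ + dist v₀ w :=
      dist_triangle4 _ _ _ _
    rw [dist_comm v v₀, dist_comm v₀ w] at this
    calc R < dist (γ (u k)) w := hfar'
      _ ≤ δ + (N * δ) + 2 * δ := le_trans this (by
          exact add_le_add (add_le_add hvk hdv) hv₀)
      _ = ((N : ℝ) + 3) * δ := by ring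
  have hN1 : 1 ≤ N := by
    by_contra hcon
    push_neg at hcon
    interval_cases N
    · simp at hRlt
      linarith
  have hNmin : 2 ^ (N - 1) ≤ i₀ := by
    have := Nat.find_min hNex (show N - 1 < N by omega)
    omega
  -- final computation
  have hfin : δ * (2:ℝ) ^ (R / δ - 4) ≤ L := by
    have hexp : R / δ - 4 ≤ ((N - 1 : ℕ) : ℝ) := by
      have hc : ((N - 1 : ℕ) : ℝ) = (N : ℝ) - 1 := by
        push_cast [Nat.cast_sub hN1]; ring
      rw [hc]
      rw [← div_lt_iff₀ hδ] at hRlt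
      linarith
    have h1 : (2:ℝ) ^ (R / δ - 4) ≤ (2:ℝ) ^ ((N - 1 : ℕ) : ℝ) :=
      Real.rpow_le_rpow_left_iff (x := 2) one_lt_two |>.2 hexp
    have h2 : (2:ℝ) ^ ((N - 1 : ℕ) : ℝ) = ((2 ^ (N - 1) : ℕ) : ℝ) := by
      rw [Real.rpow_natCast]; push_cast; ring
    have h3 : ((2 ^ (N - 1) : ℕ) : ℝ) ≤ (i₀ : ℝ) := Nat.cast_le.2 hNmin
    calc δ * (2:ℝ) ^ (R / δ - 4) ≤ δ * (i₀ : ℝ) := by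
          apply mul_le_mul_of_nonneg_left _ (le_of_lt hδ)
          rw [h2] at h1
          linarith
      _ = (i₀ : ℝ) * δ := by ring
      _ ≤ L := hLge
  calc ENNReal.ofReal (δ * (2:ℝ) ^ (R / δ - 4)) ≤ ENNReal.ofReal L :=
        ENNReal.ofReal_le_ofReal hfin
    _ ≤ E := by
        rw [hLdef]
        exact ENNReal.ofReal_toReal_le



end LPL

set_option maxHeartbeats 2000000 in
/-- **Lemma (long detours around a cylinder).**
There are universal constants `B, M > 0` such that: in a `δ`-hyperbolic space, if
`D = d(p,q)`, `[p,q]` is a geodesic segment parametrized by `f`, `p' = f(D/3)` and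
`q' = f(2D/3)` are the points trisecting it, and `γ` is a path from `p` to `q` whose image
avoids the closed `R`-neighborhood of the sub-segment between `p'` and `q'`, then whenever
`R/δ ≥ M` and `D/δ ≥ M` we have `ℓ(γ) ≥ D · B · 2^(R/δ)`. -/
theorem long_path_lemma :
    ∃ B M : ℝ, 0 < B ∧ 0 < M ∧
      ∀ (X : Type) [MetricSpace X] (δ : ℝ), 0 < δ → IsHyperbolicSpace X δ →
        ∀ (p q : X) (f : ℝ → X),
          f 0 = p → f (dist p q) = q →
          (∀ u ∈ Set.Icc (0 : ℝ) (dist p q), ∀ v ∈ Set.Icc (0 : ℝ) (dist p q),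
            dist (f u) (f v) = |u - v|) →
          ∀ R : ℝ, 0 < R →
          ∀ (γ : ℝ → X) (a b : ℝ), a ≤ b →
            ContinuousOn γ (Set.Icc a b) → γ a = p → γ b = q →
            -- the image of `γ` is disjoint from the closed `R`-neighborhood of the
            -- sub-segment of `[p,q]` between `p' = f(D/3)` and `q' = f(2D/3)`
            (∀ x ∈ γ '' Set.Icc a b,
              ∀ y ∈ f '' Set.Icc (dist p q / 3) (2 * dist p q / 3), R < dist x y) →
            M ≤ R / δ → M ≤ dist p q / δ →
            ENNReal.ofReal (dist p q * B * 2 ^ (R / δ)) ≤ eVariationOn γ (Set.Icc a b) := by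
  classical
  refine ⟨1/1024, 1000, by norm_num, by norm_num, ?_⟩
  intro X _ δ hδ hyp p q f hf0 hfD hiso R hR γ a b hab hγ hγa hγb havoid hM1 hM2
  set D := dist p q with hDdef
  have hD0 : 0 ≤ D := dist_nonneg
  have hRδ : 1000 * δ ≤ R := by
    rw [← le_div_iff₀ hδ]; exact hM1
  have hDδ : 1000 * δ ≤ D := by
    rw [← le_div_iff₀ hδ]; exact hM2
  -- geodesic selection
  obtain ⟨hgeo, hthin⟩ := hyp
  set seg : X → X → Set X := fun x y => Classical.choose (hgeo x y) with hsegdef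
  have hseg : ∀ x y, IsGeodesicSegment x y (seg x y) := fun x y => Classical.choose_spec (hgeo x y)
  have hpq : IsGeodesicSegment p q (f '' Set.Icc 0 D) := ⟨f, hf0, hfD, hiso, rfl⟩
  -- marker facts
  have hfp : ∀ t ∈ Set.Icc (0:ℝ) D, dist p (f t) = t := by
    intro t ht
    rw [← hf0, hiso 0 ⟨le_refl _, hD0⟩ t ht, zero_sub, abs_neg, abs_of_nonneg ht.1]
  have hfq : ∀ t ∈ Set.Icc (0:ℝ) D, dist q (f t) = D - t := by
    intro t ht
    rw [← hfD, hiso D ⟨hD0, le_refl _⟩ t ht, abs_of_nonneg (by linarith [ht.2])]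
  -- Gromov product functions to the markers
  obtain ⟨gp, hgpdef⟩ : ∃ g : X → ℝ → ℝ, ∀ x t, g x t = (t + dist x (f t) - dist p x)/2 :=
    ⟨_, fun _ _ => rfl⟩
  obtain ⟨gq, hgqdef⟩ : ∃ g : X → ℝ → ℝ, ∀ x t, g x t = ((D - t) + dist x (f t) - dist q x)/2 :=
    ⟨_, fun _ _ => rfl⟩
  have hcover : ∀ (x : X) (t : ℝ), t ∈ Set.Icc (0:ℝ) D → gp x t ≤ δ ∨ gq x t ≤ δ := by
    intro x t ht
    obtain ⟨z, hz, hdist⟩ :=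
      (hthin p q x _ _ _ hpq (hseg p x) (hseg q x)).1 (f t) ⟨t, ht, rfl⟩
    rcases hz with hz | hz
    · left
      have hcl := LPL.clearance (hseg p x) hz (f t)
      rw [hfp t ht] at hcl
      rw [dist_comm] at hdist
      rw [hgpdef]
      linarith
    · right
      have hcl := LPL.clearance (hseg q x) hz (f t)
      rw [hfq t ht] at hcl
      rw [dist_comm] at hdist
      rw [hgqdef]
      linarith
  have hgpmono : ∀ (x : X) (t t' : ℝ), t ∈ Set.Icc (0:ℝ) D → t' ∈ Set.Icc (0:ℝ) D → t ≤ t' →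
      gp x t ≤ gp x t' := by
    intro x t t' ht ht' htt'
    have h1 : dist x (f t) ≤ dist x (f t') + (t' - t) := by
      have h2 := dist_triangle x (f t') (f t)
      have h3 : dist (f t') (f t) = t' - t := by
        rw [hiso t' ht' t ht, abs_of_nonneg (by linarith)]
      linarith
    rw [hgpdef, hgpdef]; linarith
  -- marker points and the crossing times
  set K := Nat.floor (D / (24 * δ)) with hKdef
  have hKcast : (K:ℝ) ≤ D / (24*δ) := Nat.floor_le (by positivity)
  have hKcast' : D / (24*δ) < (K:ℝ) + 1 := Nat.lt_floor_add_one _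
  have hKge : (2:ℕ) ≤ K := by
    rw [hKdef]
    apply Nat.le_floor
    rw [le_div_iff₀ (by positivity)]
    push_cast
    linarith
  obtain ⟨tm, htmdef⟩ : ∃ g : ℕ → ℝ, ∀ j, g j = D/3 + 8*δ*(j:ℝ) := ⟨_, fun _ => rfl⟩
  have htm8 : ∀ j : ℕ, j ≤ K → 8*δ*(j:ℝ) ≤ D/3 := by
    intro j hj
    have h1 : (j:ℝ) ≤ (K:ℝ) := Nat.cast_le.2 hj
    have h2 : (K:ℝ) ≤ D / (24*δ) := hKcast
    have h3 : 8*δ*(D/(24*δ)) = D/3 := by field_simp; ring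
    nlinarith
  have htm_win : ∀ j : ℕ, j ≤ K → tm j ∈ Set.Icc (D/3) (2*D/3) := by
    intro j hj
    have := htm8 j hj
    constructor
    · rw [htmdef]
      have h0 : (0:ℝ) ≤ 8*δ*(j:ℝ) := by positivity
      linarith
    · rw [htmdef]; linarith
  have htm_Icc : ∀ j : ℕ, j ≤ K → tm j ∈ Set.Icc (0:ℝ) D := by
    intro j hj
    have h := htm_win j hj
    exact ⟨by linarith [h.1, hD0], by linarith [h.2, hD0]⟩
  have hts_win : ∀ j : ℕ, j + 1 ≤ K → tm j + 4*δ ∈ Set.Icc (D/3) (2*D/3) := by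
    intro j hj
    have h := htm_win (j+1) hj
    have he : tm (j+1) = tm j + 8*δ := by rw [htmdef, htmdef]; push_cast; ring
    constructor
    · have := (htm_win j (by omega)).1; linarith
    · have h2 := h.2; rw [he] at h2; linarith
  have hts_Icc : ∀ j : ℕ, j + 1 ≤ K → tm j + 4*δ ∈ Set.Icc (0:ℝ) D := by
    intro j hj
    have h := hts_win j hj
    exact ⟨by linarith [h.1, hD0], by linarith [h.2, hD0]⟩
  obtain ⟨S, hSmem⟩ : ∃ S : ℕ → Set ℝ,
      ∀ j s, s ∈ S j ↔ (s ∈ Set.Icc a b ∧ gp (γ s) (tm j) ≤ δ) :=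
    ⟨fun j => {s : ℝ | s ∈ Set.Icc a b ∧ gp (γ s) (tm j) ≤ δ}, fun _ _ => Iff.rfl⟩
  obtain ⟨τ, hτeq⟩ : ∃ τ : ℕ → ℝ, ∀ j, τ j = sInf (S j) := ⟨_, fun _ => rfl⟩
  have hSb : ∀ j : ℕ, j ≤ K → b ∈ S j := by
    intro j hj
    refine (hSmem j b).2 ⟨⟨hab, le_refl _⟩, ?_⟩
    rw [hγb, hgpdef, hfq _ (htm_Icc j hj), ← hDdef]
    nlinarith [hδ]
  have hSbdd : ∀ j, BddBelow (S j) := fun j => ⟨a, fun x hx => ((hSmem j x).1 hx).1.1⟩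
  have hSne : ∀ j : ℕ, j ≤ K → (S j).Nonempty := fun j hj => ⟨b, hSb j hj⟩
  have hτmem : ∀ j : ℕ, j ≤ K → τ j ∈ Set.Icc a b := by
    intro j hj
    rw [hτeq]
    constructor
    · exact le_csInf (hSne j hj) (fun y hy => ((hSmem j y).1 hy).1.1)
    · exact csInf_le_of_le (hSbdd j) (hSb j hj) (le_refl _)
  have hgpc : ∀ (c : ℝ), ContinuousOn (fun s => gp (γ s) c) (Set.Icc a b) := by
    intro c
    have : (fun s => gp (γ s) c) = fun s => (c + dist (γ s) (f c) - dist p (γ s))/2 := by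
      funext s; rw [hgpdef]
    rw [this]
    apply ContinuousOn.div_const
    apply ContinuousOn.sub
    · exact continuousOn_const.add ((continuous_id.dist continuous_const).comp_continuousOn hγ)
    · exact (continuous_const.dist continuous_id).comp_continuousOn hγ
  have hgqc : ∀ (c : ℝ), ContinuousOn (fun s => gq (γ s) c) (Set.Icc a b) := by
    intro c
    have : (fun s => gq (γ s) c) = fun s => ((D - c) + dist (γ s) (f c) - dist q (γ s))/2 := by
      funext s; rw [hgqdef]
    rw [this]
    apply ContinuousOn.div_const
    apply ContinuousOn.sub
    · exact continuousOn_const.add ((continuous_id.dist continuous_const).comp_continuousOn hγ)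
    · exact (continuous_const.dist continuous_id).comp_continuousOn hγ
  have hτgp : ∀ j : ℕ, j ≤ K → gp (γ (τ j)) (tm j) ≤ δ := by
    intro j hj
    by_contra hgt
    push_neg at hgt
    have hτIcc := hτmem j hj
    have hc := (hgpc (tm j)).continuousWithinAt hτIcc
    rw [Metric.continuousWithinAt_iff] at hc
    obtain ⟨η, hη, hball⟩ := hc (gp (γ (τ j)) (tm j) - δ) (by linarith)
    obtain ⟨x₀, hx₀S, hx₀lt⟩ := exists_lt_of_csInf_lt (hSne j hj)
      (show sInf (S j) < τ j + η by rw [← hτeq]; linarith)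
    have hx₀ge : τ j ≤ x₀ := by rw [hτeq]; exact csInf_le (hSbdd j) hx₀S
    have hx₀' := (hSmem j x₀).1 hx₀S
    have hclose : dist x₀ (τ j) < η := by
      rw [Real.dist_eq, abs_of_nonneg (by linarith)]
      linarith
    have hb := hball hx₀'.1 hclose
    rw [Real.dist_eq] at hb
    cases' abs_lt.1 hb with h1 h2
    linarith [hx₀'.2]
  have hτa : ∀ j : ℕ, 1 ≤ j → j ≤ K → a < τ j := by
    intro j hj1 hj
    rcases eq_or_lt_of_le (hτmem j hj).1 with heq | hlt
    · exfalso
      have h1 := hτgp j hj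
      rw [← heq, hγa, hgpdef, hfp _ (htm_Icc j hj), dist_self] at h1
      have h2 : D/3 + 8*δ*(j:ℝ) ≥ 8*δ := by
        have : (1:ℝ) ≤ (j:ℝ) := by exact_mod_cast hj1
        nlinarith
      rw [htmdef] at h1
      linarith
    · exact hlt
  have hτgq : ∀ j : ℕ, 1 ≤ j → j ≤ K → gq (γ (τ j)) (tm j) ≤ δ := by
    intro j hj1 hj
    by_contra hgt
    push_neg at hgt
    have hτIcc := hτmem j hj
    have hc := (hgqc (tm j)).continuousWithinAt hτIcc
    rw [Metric.continuousWithinAt_iff] at hc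
    obtain ⟨η, hη, hball⟩ := hc (gq (γ (τ j)) (tm j) - δ) (by linarith)
    set s' := max a (τ j - η/2) with hs'def
    have hs'lt : s' < τ j := max_lt (hτa j hj1 hj) (by linarith)
    have hs'mem : s' ∈ Set.Icc a b := ⟨le_max_left _ _, le_trans (le_of_lt hs'lt) (hτmem j hj).2⟩
    have hclose : dist s' (τ j) < η := by
      rw [Real.dist_eq, abs_of_nonpos (by linarith)]
      have : τ j - η/2 ≤ s' := le_max_right _ _
      linarith
    have hb := hball hs'mem hclose
    rw [Real.dist_eq] at hb
    have hgq' : δ < gq (γ s') (tm j) := by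
      cases' abs_lt.1 hb with h1 h2
      linarith
    have hs'notS : s' ∉ S j := by
      intro hmem
      have := csInf_le (hSbdd j) hmem
      rw [← hτeq] at this
      linarith
    have hgp' : δ < gp (γ s') (tm j) := by
      by_contra hle
      push_neg at hle
      exact hs'notS ((hSmem j s').2 ⟨hs'mem, hle⟩)
    rcases hcover (γ s') (tm j) (htm_Icc j hj) with h | h
    · linarith
    · linarith
  have hτmono : ∀ j : ℕ, j + 1 ≤ K → τ j ≤ τ (j+1) := by
    intro j hj
    rw [hτeq, hτeq]
    apply csInf_le_csInf (hSbdd j) (hSne (j+1) hj)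
    intro s hs
    have hs' := (hSmem (j+1) s).1 hs
    refine (hSmem j s).2 ⟨hs'.1, ?_⟩
    refine le_trans (hgpmono (γ s) (tm j) (tm (j+1)) (htm_Icc j (by omega)) (htm_Icc (j+1) hj) ?_) hs'.2
    rw [htmdef, htmdef]
    push_cast
    nlinarith [hδ]
  -- the per-piece exponential lower bound
  have hR4 : 4 * δ ≤ R := by linarith
  have hpiece : ∀ j : ℕ, 1 ≤ j → j + 1 ≤ K →
      ENNReal.ofReal (δ * (2:ℝ) ^ (R / δ - 4)) ≤
        eVariationOn γ (Set.Icc (τ j) (τ (j+1))) := by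
    intro j hj1 hjK
    have hjK' : j ≤ K := by omega
    have hx_gp : gp (γ (τ j)) (tm j) ≤ δ := hτgp j hjK'
    have hx_gq : gq (γ (τ j)) (tm j) ≤ δ := hτgq j hj1 hjK'
    have hy_gp : gp (γ (τ (j+1))) (tm (j+1)) ≤ δ := hτgp (j+1) hjK
    have hy_gq : gq (γ (τ (j+1))) (tm (j+1)) ≤ δ := hτgq (j+1) (by omega) hjK
    set x := γ (τ j) with hxdef
    set y := γ (τ (j+1)) with hydef
    set ts := tm j + 4*δ with htsdef
    set m := f ts with hmdef
    have htsI : ts ∈ Set.Icc (0:ℝ) D := hts_Icc j hjK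
    have htjI : tm j ∈ Set.Icc (0:ℝ) D := htm_Icc j hjK'
    have htj1I : tm (j+1) ∈ Set.Icc (0:ℝ) D := htm_Icc (j+1) hjK
    have hdpm : dist p m = ts := hfp ts htsI
    have hdqm : dist q m = D - ts := hfq ts htsI
    have htm_succ : tm (j+1) = tm j + 8*δ := by rw [htmdef, htmdef]; push_cast; ring
    -- clearance of the geodesic [p,x] from the midpoint marker
    have hgpxs : 3*δ ≤ gp x ts := by
      have e1 : dist q x ≤ dist q m + dist m x := dist_triangle _ _ _
      have e2 : dist p x ≤ dist p (f (tm j)) + dist (f (tm j)) x := dist_triangle _ _ _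
      have e3 : dist p (f (tm j)) = tm j := hfp _ htjI
      have e4 := hx_gq
      rw [hgqdef] at e4
      have c1 : dist m x = dist x m := dist_comm _ _
      have c2 : dist (f (tm j)) x = dist x (f (tm j)) := dist_comm _ _
      rw [hgpdef]
      rw [hmdef] at *
      linarith
    have hgqys : 3*δ ≤ gq y ts := by
      have e1 : dist p y ≤ dist p m + dist m y := dist_triangle _ _ _
      have e2 : dist q y ≤ dist q (f (tm (j+1))) + dist (f (tm (j+1))) y := dist_triangle _ _ _
      have e3 : dist q (f (tm (j+1))) = D - tm (j+1) := hfq _ htj1I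
      have e4 := hy_gp
      rw [hgpdef] at e4
      have c1 : dist m y = dist y m := dist_comm _ _
      have c2 : dist (f (tm (j+1))) y = dist y (f (tm (j+1))) := dist_comm _ _
      rw [hgqdef]
      rw [hmdef] at *
      rw [htm_succ] at *
      linarith
    have hclear_px : ∀ v ∈ seg p x, 3*δ ≤ dist v m := by
      intro v hv
      have hcl := LPL.clearance (hseg p x) hv m
      rw [hdpm] at hcl
      have hg := hgpxs
      rw [hgpdef] at hg
      rw [hmdef] at *
      linarith
    have hclear_qy : ∀ v ∈ seg q y, 3*δ ≤ dist v m := by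
      intro v hv
      have hcl := LPL.clearance (hseg q y) hv m
      rw [hdqm] at hcl
      have hg := hgqys
      rw [hgqdef] at hg
      rw [hmdef] at *
      linarith
    -- triangle 1 : the midpoint marker is δ-close to the side [q,x]
    obtain ⟨z₁, hz₁, hz₁d⟩ :=
      (hthin p q x _ _ _ hpq (hseg p x) (hseg q x)).1 m ⟨ts, htsI, by rw [hmdef]⟩
    have hz₁qx : z₁ ∈ seg q x := by
      rcases hz₁ with hz₁ | hz₁
      · exfalso
        have := hclear_px z₁ hz₁
        rw [dist_comm] at hz₁d
        linarith
      · exact hz₁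
    -- triangle 2 : a point of the chord [x,y] is 2δ-close to the marker
    obtain ⟨w₀, hw₀, hw₀d⟩ :=
      (hthin x q y _ _ _ (LPL.reverse (hseg q x)) (hseg x y) (hseg q y)).1 z₁ hz₁qx
    have hw₀xy : w₀ ∈ seg x y := by
      rcases hw₀ with hw₀ | hw₀
      · exact hw₀
      · exfalso
        have h3 := hclear_qy w₀ hw₀
        have : dist w₀ m ≤ dist w₀ z₁ + dist z₁ m := dist_triangle _ _ _
        rw [dist_comm w₀ z₁] at this
        rw [dist_comm] at hz₁d
        linarith
    have hseed : dist m w₀ ≤ 2*δ := by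
      have : dist m w₀ ≤ dist m z₁ + dist z₁ w₀ := dist_triangle _ _ _
      linarith
    -- apply the bisection bound to the piece
    have hτj := hτmem j hjK'
    have hτj1 := hτmem (j+1) hjK
    have hτle : τ j ≤ τ (j+1) := hτmono j hjK
    apply LPL.piece_lower_bound seg hseg hthin hτle
      (hγ.mono (Set.Icc_subset_Icc hτj.1 hτj1.2)) hδ hR4
    · intro s hs
      have hsab : s ∈ Set.Icc a b := ⟨le_trans hτj.1 hs.1, le_trans hs.2 hτj1.2⟩
      exact havoid (γ s) ⟨s, hsab, rfl⟩ m ⟨ts, hts_win j hjK, by rw [hmdef]⟩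
    · exact ⟨w₀, hw₀xy, hseed⟩
  -- summing the pieces
  set c : ENNReal := ENNReal.ofReal (δ * (2:ℝ) ^ (R / δ - 4)) with hcdef
  have hchain : ∀ n : ℕ, n + 1 ≤ K → (n : ENNReal) * c ≤
      eVariationOn γ (Set.Icc a (τ (n+1))) := by
    intro n
    induction n with
    | zero => intro _; simp
    | succ n ih =>
      intro hn
      have h1 := ih (by omega)
      have h2 := hpiece (n+1) (by omega) hn
      have hadd := eVariationOn.Icc_add_Icc γ (s := Set.univ)
        (hτmem (n+1) (by omega)).1 (hτmono (n+1) hn) (Set.mem_univ _)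
      simp only [Set.univ_inter] at hadd
      calc ((n+1 : ℕ) : ENNReal) * c = (n : ENNReal) * c + c := by
            push_cast; ring
        _ ≤ eVariationOn γ (Set.Icc a (τ (n+1))) + eVariationOn γ (Set.Icc (τ (n+1)) (τ (n+2))) :=
            add_le_add h1 h2
        _ = eVariationOn γ (Set.Icc a (τ (n+2))) := hadd
  have htotal : ((K - 1 : ℕ) : ENNReal) * c ≤ eVariationOn γ (Set.Icc a b) := by
    have h1 := hchain (K-1) (by omega)
    have h2 : (K - 1) + 1 = K := by omega
    rw [h2] at h1
    refine le_trans h1 (eVariationOn.mono γ ?_)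
    exact Set.Icc_subset_Icc (le_refl _) (hτmem K (le_refl _)).2
  -- final arithmetic
  have hrpow_pos : (0:ℝ) < (2:ℝ) ^ (R / δ) := Real.rpow_pos_of_pos (by norm_num) _
  have hsplit : (2:ℝ) ^ (R / δ - 4) = (2:ℝ) ^ (R / δ) / 16 := by
    have h4 : (2:ℝ) ^ (4:ℝ) = 16 := by
      rw [show (4:ℝ) = ((4:ℕ):ℝ) by norm_num, Real.rpow_natCast]
      norm_num
    rw [Real.rpow_sub (by norm_num), h4]
  have hKreal : ((K - 1 : ℕ) : ℝ) = (K:ℝ) - 1 := by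
    rw [Nat.cast_sub (by omega)]
    norm_num
  have hfinal_real : D * (1/1024) * (2:ℝ) ^ (R / δ) ≤
      ((K - 1 : ℕ) : ℝ) * (δ * (2:ℝ) ^ (R / δ - 4)) := by
    rw [hsplit, hKreal]
    have hK1 : D / (24*δ) - 1 ≤ (K:ℝ) := by linarith
    have hbase : D * (1/1024) ≤ ((K:ℝ) - 1) * (δ / 16) := by
      have h24 : (0:ℝ) < 24 * δ := by linarith
      have hKlb : D / (24*δ) - 2 ≤ (K:ℝ) - 1 := by linarith
      have hD24 : D / (24*δ) * δ = D / 24 := by field_simp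
      nlinarith [hδ, hDδ]
    calc D * (1/1024) * (2:ℝ) ^ (R / δ) ≤ (((K:ℝ) - 1) * (δ / 16)) * (2:ℝ) ^ (R / δ) := by
          exact mul_le_mul_of_nonneg_right hbase (le_of_lt hrpow_pos)
      _ = ((K:ℝ) - 1) * (δ * ((2:ℝ) ^ (R / δ) / 16)) := by ring
  calc ENNReal.ofReal (dist p q * (1/1024) * 2 ^ (R / δ))
      ≤ ENNReal.ofReal (((K - 1 : ℕ) : ℝ) * (δ * (2:ℝ) ^ (R / δ - 4))) := by
        apply ENNReal.ofReal_le_ofReal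
        rw [← hDdef]
        exact hfinal_real
    _ = ((K - 1 : ℕ) : ENNReal) * c := by
        rw [hcdef, ENNReal.ofReal_mul (by positivity), ENNReal.ofReal_natCast]
    _ ≤ eVariationOn γ (Set.Icc a b) := htotal
end

section
/- Let X be a δ-hyperbolic space and let x, y, z ∈ X. Fix a geodesic segment σ between x and y, and suppose that d(z,x) = d(z,y) = min_{w ∈ σ} d(z,w), i.e., x and y are both points of σ at minimal distance from z. Then d(x,y) ≤ 4δ. -/
private lemma endpoint_close_aux {X : Type*} [MetricSpace X] {δ : ℝ} {e z m : X} {s : Set X}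
    (hs : IsGeodesicSegment e z s) {q : X} (hq : q ∈ s) (hmq : dist m q ≤ δ)
    (hm : dist z e ≤ dist z m) : dist e m ≤ 2 * δ := by
  obtain ⟨f, hf0, hfD, hiso, hsimg⟩ := hs
  rw [hsimg] at hq
  obtain ⟨u, hu, rfl⟩ := hq
  set D := dist e z with hD
  have hDmem : D ∈ Set.Icc (0:ℝ) D := ⟨dist_nonneg, le_refl _⟩
  have h0mem : (0:ℝ) ∈ Set.Icc (0:ℝ) D := ⟨le_refl _, dist_nonneg⟩
  have heq1 : dist e (f u) = u := by
    have := hiso 0 h0mem u hu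
    rw [hf0] at this
    rw [this, abs_of_nonpos (by linarith [hu.1])]; ring
  have heq2 : dist z (f u) = D - u := by
    have := hiso D hDmem u hu
    rw [hfD] at this
    rw [this, abs_of_nonneg (by linarith [hu.2])]
  have hze : dist z e = D := dist_comm z e
  have h1 : dist z m ≤ dist z (f u) + dist (f u) m := dist_triangle _ _ _
  have h2 : dist (f u) m ≤ δ := by rw [dist_comm]; exact hmq
  have hu2 : u ≤ δ := by rw [heq2] at h1; rw [hze] at hm; linarith
  calc dist e m ≤ dist e (f u) + dist (f u) m := dist_triangle _ _ _
    _ ≤ 2 * δ := by rw [heq1]; linarith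

/-- If `x` and `y` are both points of a geodesic segment `σ` between them at minimal
distance from `z`, then `d(x,y) ≤ 4δ`. -/
theorem isoceles_lemma {X : Type*} [MetricSpace X] (δ : ℝ)
    (hX : IsHyperbolicSpace X δ) (x y z : X) (σ : Set X)
    (hσ : IsGeodesicSegment x y σ)
    (heq : dist z x = dist z y)
    (hmin : ∀ w ∈ σ, dist z x ≤ dist z w) :
    dist x y ≤ 4 * δ := by
  obtain ⟨hgeo, hthin⟩ := hX
  obtain ⟨sxz, hsxz⟩ := hgeo x z
  obtain ⟨syz, hsyz⟩ := hgeo y z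
  have hT := hthin x y z σ sxz syz hσ hsxz hsyz
  obtain ⟨f, hf0, hfD, hiso, hsimg⟩ := hσ
  set D := dist x y with hD
  have hDnn : (0:ℝ) ≤ D := dist_nonneg
  have hmem : D/2 ∈ Set.Icc (0:ℝ) D := ⟨by linarith, by linarith⟩
  set m := f (D/2) with hm
  have hmσ : m ∈ σ := by rw [hsimg]; exact ⟨D/2, hmem, rfl⟩
  have hxm : dist x m = D/2 := by
    have := hiso 0 ⟨le_refl _, hDnn⟩ (D/2) hmem
    rw [hf0] at this
    rw [this, abs_of_nonpos (by linarith)]; ring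
  have hym : dist y m = D/2 := by
    have := hiso D ⟨hDnn, le_refl _⟩ (D/2) hmem
    rw [hfD] at this
    rw [this, abs_of_nonneg (by linarith)]; ring
  obtain ⟨q, hq, hmq⟩ := hT.1 m hmσ
  have hzmin : dist z x ≤ dist z m := hmin m hmσ
  rcases hq with hq | hq
  · have := endpoint_close_aux hsxz hq hmq (by rw [dist_comm z x] at hzmin ⊢; exact hzmin)
    rw [hxm] at this; linarith
  · have := endpoint_close_aux hsyz hq hmq (by rw [← heq]; exact hzmin)
    rw [hym] at this; linarith
end

section
/- There is a universal constant C > 0 (for instance C = 8 works) such that the following holds. Let X be a δ-hyperbolic space with δ > 0, let p, q ∈ X, fix a geodesic segment σ between p and q, and let β be a path in X from p to q. Then for every closed subinterval I of σ of length C·δ, there exist a point x on the image of β and a point r ∈ I with d(x,r) = min_{s ∈ σ} d(x,s), i.e., r is a nearest point of σ to x and r lies in I. -/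
/-- subsegment of a geodesic is a geodesic segment -/
lemma sub_geodesic {X : Type*} [MetricSpace X] {D : ℝ} {f : ℝ → X}
    (hf : ∀ u ∈ Set.Icc (0 : ℝ) D, ∀ v ∈ Set.Icc (0 : ℝ) D, dist (f u) (f v) = |u - v|)
    {s₁ s₂ : ℝ} (h1 : s₁ ∈ Set.Icc (0:ℝ) D) (h2 : s₂ ∈ Set.Icc (0:ℝ) D) (hle : s₁ ≤ s₂) :
    IsGeodesicSegment (f s₁) (f s₂) (f '' Set.Icc s₁ s₂) := by
  have hd : dist (f s₁) (f s₂) = s₂ - s₁ := by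
    rw [hf s₁ h1 s₂ h2, abs_of_nonpos (by linarith)]; ring
  refine ⟨fun w => f (s₁ + w), by simp, ?_, ?_, ?_⟩
  · rw [hd]; ring_nf
  · intro w hw w' hw'
    rw [hd] at hw hw'
    have hw1 : s₁ + w ∈ Set.Icc (0:ℝ) D := ⟨by linarith [hw.1, h1.1], by linarith [hw.2, h2.2]⟩
    have hw2 : s₁ + w' ∈ Set.Icc (0:ℝ) D := ⟨by linarith [hw'.1, h1.1], by linarith [hw'.2, h2.2]⟩
    rw [hf _ hw1 _ hw2]; ring_nf
  · rw [hd]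
    have : (fun w => f (s₁ + w)) '' Set.Icc 0 (s₂ - s₁)
        = f '' ((fun w => s₁ + w) '' Set.Icc 0 (s₂ - s₁)) := by
      rw [Set.image_image]
    rw [this, Set.image_const_add_Icc]
    norm_num

/-- diameter of the set of nearest points is at most 4δ -/
lemma nearest_diam {X : Type} [MetricSpace X] {δ : ℝ}
    (hyp : IsHyperbolicSpace X δ) {D : ℝ} {f : ℝ → X}
    (hf : ∀ u ∈ Set.Icc (0 : ℝ) D, ∀ v ∈ Set.Icc (0 : ℝ) D, dist (f u) (f v) = |u - v|)
    (x : X) {d : ℝ} {s₁ s₂ : ℝ} (h1 : s₁ ∈ Set.Icc (0:ℝ) D) (h2 : s₂ ∈ Set.Icc (0:ℝ) D)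
    (hle : s₁ ≤ s₂)
    (hd1 : dist x (f s₁) = d) (hd2 : dist x (f s₂) = d)
    (hmin : ∀ s ∈ Set.Icc (0:ℝ) D, d ≤ dist x (f s)) : s₂ - s₁ ≤ 4 * δ := by
  obtain ⟨sxA, hsxA⟩ := hyp.1 x (f s₁)
  obtain ⟨sxB, hsxB⟩ := hyp.1 x (f s₂)
  have hseg := sub_geodesic hf h1 h2 hle
  have thin := hyp.2 x (f s₁) (f s₂) sxA sxB _ hsxA hsxB hseg
  set mid := (s₁ + s₂) / 2 with hmid
  have hmidmem : mid ∈ Set.Icc s₁ s₂ := ⟨by simp [hmid]; linarith, by simp [hmid]; linarith⟩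
  have hmidD : mid ∈ Set.Icc (0:ℝ) D := ⟨by linarith [h1.1, hmidmem.1], by linarith [h2.2, hmidmem.2]⟩
  obtain ⟨w, hw, hwdist⟩ := thin.2.2 (f mid) ⟨mid, hmidmem, rfl⟩
  have key : dist (f mid) (f s₁) ≤ 2 * δ ∨ dist (f mid) (f s₂) ≤ 2 * δ := by
    rcases hw with hw | hw
    · -- w on geodesic from x to f s₁
      left
      obtain ⟨g, hg0, hgd, hgiso, hset⟩ := hsxA
      rw [hset] at hw
      obtain ⟨c, hc, rfl⟩ := hw
      have hc0 : (0:ℝ) ∈ Set.Icc (0:ℝ) (dist x (f s₁)) := ⟨le_refl _, dist_nonneg⟩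
      have hcd : dist x (f s₁) ∈ Set.Icc (0:ℝ) (dist x (f s₁)) := ⟨dist_nonneg, le_refl _⟩
      have hxw : dist x (g c) = c := by
        rw [← hg0, hgiso 0 hc0 c hc, abs_of_nonpos (by linarith [hc.1])]; ring
      have hws : dist (g c) (f s₁) = d - c := by
        rw [← hgd, hgiso c hc _ hcd, hd1, abs_of_nonpos (by linarith [hc.2, hd1])]; ring
      have h1' : d ≤ dist x (f mid) := hmin mid hmidD
      have h2' : dist x (f mid) ≤ c + δ := by
        calc dist x (f mid) ≤ dist x (g c) + dist (g c) (f mid) := dist_triangle _ _ _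
          _ ≤ c + δ := by rw [hxw]; linarith [dist_comm (f mid) (g c) ▸ hwdist]
      calc dist (f mid) (f s₁) ≤ dist (f mid) (g c) + dist (g c) (f s₁) := dist_triangle _ _ _
        _ ≤ 2 * δ := by rw [hws]; linarith
    · -- w on geodesic from x to f s₂
      right
      obtain ⟨g, hg0, hgd, hgiso, hset⟩ := hsxB
      rw [hset] at hw
      obtain ⟨c, hc, rfl⟩ := hw
      have hc0 : (0:ℝ) ∈ Set.Icc (0:ℝ) (dist x (f s₂)) := ⟨le_refl _, dist_nonneg⟩
      have hcd : dist x (f s₂) ∈ Set.Icc (0:ℝ) (dist x (f s₂)) := ⟨dist_nonneg, le_refl _⟩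
      have hxw : dist x (g c) = c := by
        rw [← hg0, hgiso 0 hc0 c hc, abs_of_nonpos (by linarith [hc.1])]; ring
      have hws : dist (g c) (f s₂) = d - c := by
        rw [← hgd, hgiso c hc _ hcd, hd2, abs_of_nonpos (by linarith [hc.2, hd2])]; ring
      have h1' : d ≤ dist x (f mid) := hmin mid hmidD
      have h2' : dist x (f mid) ≤ c + δ := by
        calc dist x (f mid) ≤ dist x (g c) + dist (g c) (f mid) := dist_triangle _ _ _
          _ ≤ c + δ := by rw [hxw]; linarith [dist_comm (f mid) (g c) ▸ hwdist]
      calc dist (f mid) (f s₂) ≤ dist (f mid) (g c) + dist (g c) (f s₂) := dist_triangle _ _ _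
        _ ≤ 2 * δ := by rw [hws]; linarith
  rcases key with h | h
  · rw [hf mid hmidD s₁ h1, abs_of_nonneg (by linarith [hmidmem.1])] at h
    simp only [hmid] at h ⊢; linarith
  · rw [hf mid hmidD s₂ h2, abs_of_nonpos (by linarith [hmidmem.2])] at h
    simp only [hmid] at h ⊢; linarith

/-- **Lemma (skeleton).** There is a universal constant `C > 0` such that: in a
`δ`-hyperbolic space, if `σ` is a geodesic segment from `p` to `q` parametrized by `f`,
and `β` is a path from `p` to `q`, then every closed subinterval of `σ` of length `C·δ`
contains a point `r` which is a nearest point of `σ` to some point `x` on `β`. -/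
theorem skeleton_lemma :
    ∃ C : ℝ, 0 < C ∧
      ∀ (X : Type) [MetricSpace X] (δ : ℝ), 0 < δ → IsHyperbolicSpace X δ →
        ∀ (p q : X) (f : ℝ → X),
          f 0 = p → f (dist p q) = q →
          (∀ u ∈ Set.Icc (0 : ℝ) (dist p q), ∀ v ∈ Set.Icc (0 : ℝ) (dist p q),
            dist (f u) (f v) = |u - v|) →
          ∀ (β : ℝ → X) (a b : ℝ), a ≤ b →
            ContinuousOn β (Set.Icc a b) → β a = p → β b = q →
            -- `f '' [u,v]` is a closed subinterval of `σ` of length `C·δ`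
            ∀ u v : ℝ, 0 ≤ u → v ≤ dist p q → v - u = C * δ →
              ∃ t ∈ Set.Icc a b, ∃ r ∈ f '' Set.Icc u v,
                ∀ s ∈ f '' Set.Icc (0 : ℝ) (dist p q), dist (β t) r ≤ dist (β t) s := by
  refine ⟨8, by norm_num, ?_⟩
  intro X _ δ hδ hyp p q f hf0 hfD hf β a b hab hβc hβa hβb u v hu hv huv
  set D := dist p q with hD
  have hDnn : (0:ℝ) ≤ D := dist_nonneg
  have huv' : u ≤ v := by linarith
  have huD : u ∈ Set.Icc (0:ℝ) D := ⟨hu, by linarith⟩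
  have hvD : v ∈ Set.Icc (0:ℝ) D := ⟨by linarith, hv⟩
  set m := (u + v) / 2 with hm
  have hmD : m ∈ Set.Icc (0:ℝ) D := ⟨by simp [hm]; linarith, by simp [hm]; linarith⟩
  -- continuity of f on [0,D]
  have hfc : ContinuousOn f (Set.Icc (0:ℝ) D) := by
    intro s hs
    apply Metric.continuousWithinAt_iff.2
    intro ε hε
    exact ⟨ε, hε, fun {s'} hs' h => by rw [hf s' hs' s hs]; rwa [Real.dist_eq] at h⟩
  set A := f '' Set.Icc (0:ℝ) m with hA
  set B := f '' Set.Icc m D with hB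
  have hAne : A.Nonempty := ⟨f 0, ⟨0, ⟨le_refl _, hmD.1⟩, rfl⟩⟩
  have hBne : B.Nonempty := ⟨f m, ⟨m, ⟨le_refl _, hmD.2⟩, rfl⟩⟩
  have hAcomp : IsCompact A := (isCompact_Icc).image_of_continuousOn
    (hfc.mono (Set.Icc_subset_Icc (le_refl _) hmD.2))
  have hBcomp : IsCompact B := (isCompact_Icc).image_of_continuousOn
    (hfc.mono (Set.Icc_subset_Icc hmD.1 (le_refl _)))
  -- IVT on F t = infDist (β t) A - infDist (β t) B
  set F : ℝ → ℝ := fun t => Metric.infDist (β t) A - Metric.infDist (β t) B with hF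
  have hFc : ContinuousOn F (Set.Icc a b) := by
    apply ContinuousOn.sub
    · exact (Metric.continuous_infDist_pt A).comp_continuousOn hβc
    · exact (Metric.continuous_infDist_pt B).comp_continuousOn hβc
  have hFa : F a ≤ 0 := by
    have : Metric.infDist (β a) A = 0 := by
      apply Metric.infDist_zero_of_mem
      rw [hβa, ← hf0]
      exact ⟨0, ⟨le_refl _, hmD.1⟩, rfl⟩
    simp [hF, this, Metric.infDist_nonneg]
  have hFb : (0:ℝ) ≤ F b := by
    have : Metric.infDist (β b) B = 0 := by
      apply Metric.infDist_zero_of_mem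
      rw [hβb, ← hfD]
      exact ⟨D, ⟨hmD.2, le_refl _⟩, rfl⟩
    simp [hF, this, Metric.infDist_nonneg]
  have hmem : (0:ℝ) ∈ Set.Icc (F a) (F b) := ⟨hFa, hFb⟩
  obtain ⟨t, ht, hFt⟩ := intermediate_value_Icc hab hFc hmem
  set x := β t with hx
  -- nearest points in A and B
  obtain ⟨rA, hrA, hdA⟩ := hAcomp.exists_infDist_eq_dist hAne x
  obtain ⟨rB, hrB, hdB⟩ := hBcomp.exists_infDist_eq_dist hBne x
  have heq : Metric.infDist x A = Metric.infDist x B := by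
    have : F t = 0 := hFt
    simp only [hF] at this; linarith
  set d := Metric.infDist x A with hd
  obtain ⟨sA, hsA, rfl⟩ := hrA
  obtain ⟨sB, hsB, rfl⟩ := hrB
  have hsAD : sA ∈ Set.Icc (0:ℝ) D := ⟨hsA.1, le_trans hsA.2 hmD.2⟩
  have hsBD : sB ∈ Set.Icc (0:ℝ) D := ⟨le_trans hmD.1 hsB.1, hsB.2⟩
  -- both are global nearest points
  have hmin : ∀ s ∈ Set.Icc (0:ℝ) D, d ≤ dist x (f s) := by
    intro s hs
    rcases le_or_gt s m with h | h
    · exact Metric.infDist_le_dist_of_mem (⟨s, ⟨hs.1, h⟩, rfl⟩ : f s ∈ A)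
    · exact heq.trans_le (Metric.infDist_le_dist_of_mem (⟨s, ⟨le_of_lt h, hs.2⟩, rfl⟩ : f s ∈ B))
  have hdA' : dist x (f sA) = d := hdA.symm
  have hdB' : dist x (f sB) = d := by rw [← hdB, heq]
  have hsAB : sA ≤ sB := le_trans hsA.2 hsB.1
  have hdiam : sB - sA ≤ 4 * δ := nearest_diam hyp hf x hsAD hsBD hsAB hdA' hdB' hmin
  refine ⟨t, ht, f sA, ⟨sA, ⟨?_, le_trans hsA.2 (by simp [hm]; linarith)⟩, rfl⟩, ?_⟩
  · -- u ≤ sA : sA ≥ sB - 4δ ≥ m - 4δ = u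
    have : m ≤ sB := hsB.1
    simp only [hm] at this; linarith
  · intro s hs
    obtain ⟨w, hw, rfl⟩ := hs
    rw [hdA']
    exact hmin w hw
end

section
/- Let X be a δ-hyperbolic space with δ > 0, let p, q, x, y ∈ X, and fix a geodesic segment σ between p and q with d(p,q) > 12δ. Suppose p is a nearest point of σ to x (i.e., d(x,p) = min_{s ∈ σ} d(x,s)) and q is a nearest point of σ to y. Then every geodesic segment between x and y contains a point within distance 2δ of σ. -/
/-- **Lemma (segments between projections).** In a `δ`-hyperbolic space, if `σ` is a
geodesic segment between `p` and `q` with `d(p,q) > 12δ`, and `p` (resp. `q`) is a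
nearest point of `σ` to `x` (resp. to `y`), then every geodesic segment between `x` and
`y` contains a point within distance `2δ` of `σ`. -/
theorem segment_lemma {X : Type*} [MetricSpace X] (δ : ℝ) (hδ : 0 < δ)
    (hX : IsHyperbolicSpace X δ) (p q x y : X) (σ : Set X)
    (hσ : IsGeodesicSegment p q σ)
    (hpq : dist p q > 12 * δ)
    (hp : ∀ s ∈ σ, dist x p ≤ dist x s)
    (hq : ∀ s ∈ σ, dist y q ≤ dist y s) :
    ∀ τ : Set X, IsGeodesicSegment x y τ →
      ∃ w ∈ τ, ∃ s ∈ σ, dist w s ≤ 2 * δ := by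
  intro τ hτ
  obtain ⟨hgeo, hthin⟩ := hX
  -- extract facts about the segment σ : midpoint m
  obtain ⟨f, hf0, hfd, hiso, hfs⟩ := hσ
  have hd0 : (0 : ℝ) ≤ dist p q := dist_nonneg
  set m : X := f (dist p q / 2) with hm
  have hmid : dist p q / 2 ∈ Set.Icc (0 : ℝ) (dist p q) := by
    constructor <;> linarith
  have hmem : m ∈ σ := by rw [hfs]; exact ⟨_, hmid, rfl⟩
  have h0mem : (0 : ℝ) ∈ Set.Icc (0 : ℝ) (dist p q) := ⟨le_refl _, hd0⟩
  have hdmem : dist p q ∈ Set.Icc (0 : ℝ) (dist p q) := ⟨hd0, le_refl _⟩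
  have hpm : dist p m = dist p q / 2 := by
    have := hiso 0 h0mem (dist p q / 2) hmid
    rw [hf0] at this
    rw [this]; rw [abs_of_nonpos (by linarith)]; ring
  have hmq : dist m q = dist p q / 2 := by
    have := hiso (dist p q / 2) hmid (dist p q) hdmem
    rw [hfd] at this
    rw [this]; rw [abs_of_nonpos (by linarith)]; ring
  -- additivity on a geodesic segment
  have add_seg : ∀ (a b : X) (s : Set X), IsGeodesicSegment a b s →
      ∀ c ∈ s, dist a c + dist c b = dist a b := by
    rintro a b s ⟨g, hg0, hgd, hgiso, hgs⟩ c hc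
    rw [hgs] at hc
    obtain ⟨u, hu, rfl⟩ := hc
    have h0 : (0 : ℝ) ∈ Set.Icc (0 : ℝ) (dist a b) := ⟨le_refl _, dist_nonneg⟩
    have hD : dist a b ∈ Set.Icc (0 : ℝ) (dist a b) := ⟨dist_nonneg, le_refl _⟩
    have h1 := hgiso 0 h0 u hu
    have h2 := hgiso u hu (dist a b) hD
    rw [hg0] at h1; rw [hgd] at h2
    rw [h1, h2, abs_of_nonpos (by linarith [hu.1]), abs_of_nonpos (by linarith [hu.2])]
    ring
  -- choose geodesics [x,p], [x,q], [q,y]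
  obtain ⟨sxp, hsxp⟩ := hgeo x p
  obtain ⟨sxq, hsxq⟩ := hgeo x q
  obtain ⟨sqy, hsqy⟩ := hgeo q y
  -- triangle x p q : sides sxp, sxq, σ
  have T1 := hthin x p q sxp sxq σ hsxp hsxq ⟨f, hf0, hfd, hiso, hfs⟩
  obtain ⟨b, hb, hmb⟩ := T1.2.2 m hmem
  rcases hb with hbxp | hbxq
  · -- b ∈ [x,p] : contradiction
    exfalso
    have hadd := add_seg x p sxp hsxp b hbxp
    have h1 : dist x p ≤ dist x m := hp m hmem
    have h2 : dist x m ≤ dist x b + dist b m := dist_triangle _ _ _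
    have hbm : dist b m ≤ δ := by rw [dist_comm]; exact hmb
    have hbp : dist b p ≤ δ := by linarith
    have : dist p m ≤ 2 * δ := by
      calc dist p m ≤ dist p b + dist b m := dist_triangle _ _ _
        _ ≤ δ + δ := by rw [dist_comm p b]; linarith
        _ = 2 * δ := by ring
    rw [hpm] at this; linarith
  · -- b ∈ [x,q] : use triangle x q y
    have T2 := hthin x q y sxq τ sqy hsxq hτ hsqy
    obtain ⟨c, hc, hbc⟩ := T2.1 b hbxq
    rcases hc with hcτ | hcqy
    · -- c ∈ τ : done
      refine ⟨c, hcτ, m, hmem, ?_⟩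
      calc dist c m ≤ dist c b + dist b m := dist_triangle _ _ _
        _ ≤ δ + δ := by
            have := dist_comm c b; have := dist_comm b m; linarith
        _ = 2 * δ := by ring
    · -- c ∈ [q,y] : contradiction
      exfalso
      have hadd := add_seg q y sqy hsqy c hcqy
      have h1 : dist y q ≤ dist y m := hq m hmem
      have h2 : dist y m ≤ dist y c + dist c b + dist b m := by
        calc dist y m ≤ dist y c + dist c m := dist_triangle _ _ _
          _ ≤ dist y c + (dist c b + dist b m) := by
              linarith [dist_triangle c b m]
          _ = dist y c + dist c b + dist b m := by ring
      have hbm : dist b m ≤ δ := by rw [dist_comm]; exact hmb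
      have hqc : dist q c ≤ 2 * δ := by
        have hcy : dist c y = dist y c := dist_comm _ _
        have hcb : dist c b = dist b c := dist_comm _ _
        have hyq : dist y q = dist q y := dist_comm _ _
        linarith
      have : dist m q ≤ 4 * δ := by
        calc dist m q ≤ dist m b + dist b c + dist c q := by
              linarith [dist_triangle m b q, dist_triangle b c q]
          _ ≤ δ + δ + 2 * δ := by
              have := dist_comm m b; have := dist_comm c q; linarith
          _ = 4 * δ := by ring
      rw [hmq] at this; linarith
end

section
/- Let Γ be a finite connected h-expander graph (h > 0), let p, q be vertices of Γ, let t ≥ 0 be an integer, and let S be a set of vertices of Γ such that S is disjoint from B_{Γ,p}(t) and from B_{Γ,q}(t), and such that |S| ≤ (h/2) · min( (1+h)^t , |Γ|/2 ). Then p and q lie in the same connected component of the graph Γ \ S obtained by deleting the vertices of S, and the distance between p and q in Γ \ S satisfies d_{Γ\S}(p,q) ≤ 2·log|Γ| / log(1+h/2) + 2. -/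
/-- The outer vertex boundary of a set `S` of vertices: the vertices outside `S` adjacent
to some vertex of `S`. -/
def outerBoundary {V : Type*} (G : SimpleGraph V) (S : Set V) : Set V :=
  {v | v ∉ S ∧ ∃ u ∈ S, G.Adj u v}

/-- A finite graph is an `h`-expander if every set `S` of at most half the vertices has
at least `h·|S|` vertices outside `S` adjacent to `S`. -/
def IsExpander {V : Type*} [Fintype V] (G : SimpleGraph V) (h : ℝ) : Prop :=
  ∀ S : Set V, (S.ncard : ℝ) ≤ (Fintype.card V : ℝ) / 2 →
    h * (S.ncard : ℝ) ≤ ((outerBoundary G S).ncard : ℝ)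

/-- The ball of radius `r` about `p` in the graph `G`. -/
def graphBall {V : Type*} (G : SimpleGraph V) (p : V) (r : ℕ) : Set V :=
  {v | G.dist p v ≤ r}

set_option linter.unusedSectionVars false
set_option linter.unusedVariables false
namespace ExpanderAux

open SimpleGraph Set

variable {V : Type*} [Fintype V] (G : SimpleGraph V) (S : Set V)

/-- Ball in the induced graph on the complement of `S`, defined via walks. -/
def iball (x : ↥{v : V | v ∉ S}) (r : ℕ) : Set ↥{v : V | v ∉ S} :=
  {v | ∃ w : (G.induce {v : V | v ∉ S}).Walk x v, w.length ≤ r}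

variable {G S}

lemma self_mem_iball (x : ↥{v : V | v ∉ S}) (r : ℕ) : x ∈ iball G S x r :=
  ⟨SimpleGraph.Walk.nil, by simp⟩

lemma iball_mono (x : ↥{v : V | v ∉ S}) {r r' : ℕ} (hrr : r ≤ r') :
    iball G S x r ⊆ iball G S x r' := fun v ⟨w, hw⟩ => ⟨w, hw.trans hrr⟩

lemma one_le_ncard_iball (x : ↥{v : V | v ∉ S}) (r : ℕ) :
    1 ≤ (iball G S x r).ncard := by
  have : (iball G S x r).Nonempty := ⟨x, self_mem_iball x r⟩
  exact (Set.ncard_pos (Set.toFinite _)).mpr this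

lemma dist_of_mem_iball {x v : ↥{v : V | v ∉ S}} {r : ℕ} (hv : v ∈ iball G S x r) :
    G.dist x.val v.val ≤ r := by
  obtain ⟨w, hw⟩ := hv
  have := SimpleGraph.dist_le
    (w.map (SimpleGraph.Embedding.induce {v : V | v ∉ S}).toHom)
  simpa using this.trans (by rw [SimpleGraph.Walk.length_map]; exact hw)


/-- Core growth estimate: the next ball contains the old ball plus the lifted
outer boundary minus `S`. -/
lemma grow_core (x : ↥{v : V | v ∉ S}) (r : ℕ) :
    ((iball G S x r).ncard : ℝ)
      + ((outerBoundary G (Subtype.val '' iball G S x r) \ S).ncard : ℝ)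
      ≤ ((iball G S x (r + 1)).ncard : ℝ) := by
  classical
  set B := iball G S x r with hB
  set A : Set V := Subtype.val '' B with hA
  set D : Set V := outerBoundary G A \ S with hD
  set D' : Set ↥{v : V | v ∉ S} := {v | v.val ∈ D} with hD'
  have hval : Subtype.val '' D' = D := by
    ext v
    constructor
    · rintro ⟨w, hw, rfl⟩; exact hw
    · intro hv
      exact ⟨⟨v, hv.2⟩, hv, rfl⟩
  have hcardD : D'.ncard = D.ncard := by
    rw [← hval]; exact (Set.ncard_image_of_injective _ Subtype.val_injective).symm
  have hdisj : Disjoint B D' := by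
    rw [Set.disjoint_left]
    intro v hvB hvD
    exact hvD.1.1 ⟨v, hvB, rfl⟩
  have hsub : B ∪ D' ⊆ iball G S x (r + 1) := by
    intro v hv
    rcases hv with hv | hv
    · exact iball_mono x (Nat.le_succ r) hv
    · obtain ⟨u, huA, hadj⟩ := hv.1.2
      obtain ⟨u', hu'B, rfl⟩ := huA
      obtain ⟨w, hw⟩ := hu'B
      have hadj' : (G.induce {v : V | v ∉ S}).Adj u' v := by
        simpa [SimpleGraph.comap_adj] using hadj
      exact ⟨w.concat hadj', by
        rw [SimpleGraph.Walk.length_concat]; omega⟩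
  have := Set.ncard_le_ncard hsub (Set.toFinite _)
  rw [Set.ncard_union_eq hdisj (Set.toFinite _) (Set.toFinite _), hcardD] at this
  exact_mod_cast this


lemma boundary_not_mem_S (hconn : G.Connected) {x : ↥{v : V | v ∉ S}} {t r : ℕ}
    (hSx : Disjoint S (graphBall G x.val t)) (hrt : r + 1 ≤ t)
    {v : V} (hv : v ∈ outerBoundary G (Subtype.val '' iball G S x r)) : v ∉ S := by
  obtain ⟨u, huA, hadj⟩ := hv.2
  obtain ⟨u', hu', rfl⟩ := huA
  have h1 : G.dist x.val u'.val ≤ r := dist_of_mem_iball hu'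
  have h2 : G.dist u'.val v = 1 := (SimpleGraph.dist_eq_one_iff_adj).mpr hadj
  have h3 : G.dist x.val v ≤ r + 1 := by
    have := hconn.dist_triangle (u := x.val) (v := u'.val) (w := v)
    omega
  intro hvS
  exact (Set.disjoint_left.mp hSx hvS) (show G.dist x.val v ≤ t by omega)

variable {h : ℝ}

lemma ncard_iball_mono (x : ↥{v : V | v ∉ S}) {r r' : ℕ} (hrr : r ≤ r') :
    ((iball G S x r).ncard : ℝ) ≤ ((iball G S x r').ncard : ℝ) := by
  exact_mod_cast Set.ncard_le_ncard (iball_mono x hrr) (Set.toFinite _)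

lemma exp_bound (hexp : IsExpander G h) (x : ↥{v : V | v ∉ S}) (r : ℕ)
    (hle : ((iball G S x r).ncard : ℝ) ≤ (Fintype.card V : ℝ) / 2) :
    h * ((iball G S x r).ncard : ℝ)
      ≤ ((outerBoundary G (Subtype.val '' iball G S x r)).ncard : ℝ) := by
  have hA : ((Subtype.val '' iball G S x r).ncard : ℝ) = ((iball G S x r).ncard : ℝ) := by
    rw [Set.ncard_image_of_injective _ Subtype.val_injective]
  have := hexp (Subtype.val '' iball G S x r) (by rw [hA]; exact hle)
  rwa [hA] at this

lemma phase1 (hconn : G.Connected) (hh : 0 < h) (hexp : IsExpander G h)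
    (x : ↥{v : V | v ∉ S}) {t : ℕ} (hSx : Disjoint S (graphBall G x.val t)) :
    ∀ r, r ≤ t → (Fintype.card V : ℝ) / 2 < ((iball G S x r).ncard : ℝ) ∨
      (1 + h) ^ r ≤ ((iball G S x r).ncard : ℝ) := by
  intro r
  induction r with
  | zero =>
    intro _; right
    simpa using (by exact_mod_cast one_le_ncard_iball x 0 : (1 : ℝ) ≤ ((iball G S x 0).ncard : ℝ))
  | succ r ih =>
    intro hrt
    rcases ih (by omega) with hbig | hge
    · left; exact lt_of_lt_of_le hbig (ncard_iball_mono x (Nat.le_succ r))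
    by_cases hle : ((iball G S x r).ncard : ℝ) ≤ (Fintype.card V : ℝ) / 2
    · right
      have hexp' := exp_bound hexp x r hle
      have hbS : outerBoundary G (Subtype.val '' iball G S x r) \ S
          = outerBoundary G (Subtype.val '' iball G S x r) := by
        ext v
        exact ⟨fun hv => hv.1, fun hv => ⟨hv, boundary_not_mem_S hconn hSx hrt hv⟩⟩
      have hcore := grow_core (G := G) (S := S) x r
      rw [hbS] at hcore
      have hpow : (0 : ℝ) ≤ (1 + h) ^ r := by positivity
      calc (1 + h) ^ (r + 1) = (1 + h) * (1 + h) ^ r := by ring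
        _ ≤ (1 + h) * ((iball G S x r).ncard : ℝ) := by nlinarith
        _ ≤ _ := by nlinarith
    · left
      push_neg at hle
      exact lt_of_lt_of_le hle (ncard_iball_mono x (Nat.le_succ r))

lemma key (hconn : G.Connected) (hh : 0 < h) (hexp : IsExpander G h)
    (x : ↥{v : V | v ∉ S}) {t : ℕ} (hSx : Disjoint S (graphBall G x.val t))
    (hS : (S.ncard : ℝ) ≤ (h / 2) * min ((1 + h) ^ t) ((Fintype.card V : ℝ) / 2)) :
    ∀ r, (Fintype.card V : ℝ) / 2 < ((iball G S x r).ncard : ℝ) ∨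
      (1 + h / 2) ^ r ≤ ((iball G S x r).ncard : ℝ) := by
  have hSsmall : (S.ncard : ℝ) ≤ (h / 2) * ((iball G S x t).ncard : ℝ) := by
    rcases phase1 hconn hh hexp x hSx t le_rfl with hbig | hge
    · have h1 : min ((1 + h) ^ t) ((Fintype.card V : ℝ) / 2) ≤ ((iball G S x t).ncard : ℝ) :=
        (min_le_right _ _).trans hbig.le
      nlinarith
    · have h1 : min ((1 + h) ^ t) ((Fintype.card V : ℝ) / 2) ≤ ((iball G S x t).ncard : ℝ) :=
        (min_le_left _ _).trans hge
      nlinarith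
  intro r
  induction r with
  | zero =>
    right
    simpa using (by exact_mod_cast one_le_ncard_iball x 0 : (1 : ℝ) ≤ ((iball G S x 0).ncard : ℝ))
  | succ r ih =>
    rcases ih with hbig | hge
    · left; exact lt_of_lt_of_le hbig (ncard_iball_mono x (Nat.le_succ r))
    by_cases hle : ((iball G S x r).ncard : ℝ) ≤ (Fintype.card V : ℝ) / 2
    · right
      have hexp' := exp_bound hexp x r hle
      have hcore := grow_core (G := G) (S := S) x r
      have hpow : (0 : ℝ) ≤ (1 + h / 2) ^ r := by positivity
      have hstep : (1 + h / 2) * ((iball G S x r).ncard : ℝ)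
          ≤ ((iball G S x (r + 1)).ncard : ℝ) := by
        by_cases hrt : r + 1 ≤ t
        · have hbS : outerBoundary G (Subtype.val '' iball G S x r) \ S
              = outerBoundary G (Subtype.val '' iball G S x r) := by
            ext v
            exact ⟨fun hv => hv.1, fun hv => ⟨hv, boundary_not_mem_S hconn hSx hrt hv⟩⟩
          rw [hbS] at hcore
          have hbn : (0 : ℝ) ≤ ((iball G S x r).ncard : ℝ) := by positivity
          nlinarith
        · have htr : t ≤ r := by omega
          have hSr : (S.ncard : ℝ) ≤ (h / 2) * ((iball G S x r).ncard : ℝ) := by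
            have := ncard_iball_mono (G := G) (S := S) x htr
            nlinarith
          have hdiff := Set.ncard_le_ncard_diff_add_ncard
            (outerBoundary G (Subtype.val '' iball G S x r)) S (Set.toFinite _)
          have hdiff' : ((outerBoundary G (Subtype.val '' iball G S x r)).ncard : ℝ)
              ≤ ((outerBoundary G (Subtype.val '' iball G S x r) \ S).ncard : ℝ)
                + (S.ncard : ℝ) := by exact_mod_cast hdiff
          nlinarith
      calc (1 + h / 2) ^ (r + 1) = (1 + h / 2) * (1 + h / 2) ^ r := by ring
        _ ≤ (1 + h / 2) * ((iball G S x r).ncard : ℝ) := by nlinarith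
        _ ≤ _ := hstep
    · left
      push_neg at hle
      exact lt_of_lt_of_le hle (ncard_iball_mono x (Nat.le_succ r))

end ExpanderAux

/-- **Removing a small set far from `p` and `q` keeps them close.** In a finite connected
`h`-expander, if `S` is a set of vertices disjoint from the balls of radius `t` about `p`
and about `q`, with `|S| ≤ (h/2)·min((1+h)^t, |Γ|/2)`, then `p` and `q` lie in the same
connected component of `Γ \ S`, at distance at most `2·log|Γ|/log(1+h/2) + 2` there. -/
theorem expander_remove_small_set {V : Type*} [Fintype V] (G : SimpleGraph V)
    (hconn : G.Connected) (h : ℝ) (hh : 0 < h) (hexp : IsExpander G h)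
    (p q : V) (t : ℕ) (S : Set V)
    (hSp : Disjoint S (graphBall G p t))
    (hSq : Disjoint S (graphBall G q t))
    (hS : (S.ncard : ℝ) ≤ (h / 2) * min ((1 + h) ^ t) ((Fintype.card V : ℝ) / 2)) :
    ∃ (hp : p ∈ {v | v ∉ S}) (hq : q ∈ {v | v ∉ S}),
      (G.induce {v | v ∉ S}).Reachable ⟨p, hp⟩ ⟨q, hq⟩ ∧
      (((G.induce {v | v ∉ S}).dist ⟨p, hp⟩ ⟨q, hq⟩ : ℕ) : ℝ) ≤
        2 * Real.log (Fintype.card V) / Real.log (1 + h / 2) + 2 := by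
  classical
  have hp : p ∈ {v : V | v ∉ S} := fun hpS =>
    (Set.disjoint_left.mp hSp hpS) (show G.dist p p ≤ t by rw [SimpleGraph.dist_self]; omega)
  have hq : q ∈ {v : V | v ∉ S} := fun hqS =>
    (Set.disjoint_left.mp hSq hqS) (show G.dist q q ≤ t by rw [SimpleGraph.dist_self]; omega)
  refine ⟨hp, hq, ?_, ?_⟩ <;> rotate_right
  all_goals {
    have hn0 : 0 < Fintype.card V := Fintype.card_pos_iff.mpr ⟨p⟩
    have hn1 : (1 : ℝ) ≤ (Fintype.card V : ℝ) := by exact_mod_cast hn0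
    set n : ℕ := Fintype.card V with hn
    set L : ℝ := Real.log (1 + h / 2) with hLdef
    have hL0 : 0 < L := Real.log_pos (by linarith)
    set R : ℕ := ⌊Real.log n / L⌋₊ + 1 with hRdef
    have hpowR : (n : ℝ) < (1 + h / 2) ^ R := by
      have h1 : Real.log n / L < R := by
        rw [hRdef]; push_cast; exact Nat.lt_floor_add_one _
      have h2 : Real.log n < R * L := (div_lt_iff₀ hL0).mp h1
      have h3 : (n : ℝ) = Real.exp (Real.log n) := (Real.exp_log (by positivity)).symm
      rw [h3]
      calc Real.exp (Real.log n) < Real.exp (R * L) := Real.exp_lt_exp.mpr h2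
        _ = (1 + h / 2) ^ R := by
          rw [hLdef, ← Real.log_pow, Real.exp_log (by positivity)]
    have hcardsub : (Nat.card ↥{v : V | v ∉ S} : ℝ) ≤ (n : ℝ) := by
      have h0 : Nat.card ↥{v : V | v ∉ S} ≤ Nat.card V :=
        Nat.card_le_card_of_injective Subtype.val Subtype.val_injective
      rw [show Nat.card V = n from Nat.card_eq_fintype_card.trans hn.symm] at h0
      exact_mod_cast h0
    have hcard : ∀ B : Set ↥{v : V | v ∉ S}, ((B.ncard : ℝ)) ≤ (n : ℝ) := by
      intro B
      have h1 := Set.ncard_le_ncard (Set.subset_univ B) (Set.toFinite _)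
      rw [Set.ncard_univ] at h1
      exact le_trans (by exact_mod_cast h1) hcardsub
    have hball : ∀ (x : ↥{v : V | v ∉ S}), Disjoint S (graphBall G x.val t) →
        (n : ℝ) / 2 < ((ExpanderAux.iball G S x R).ncard : ℝ) := by
      intro x hSx
      rcases ExpanderAux.key hconn hh hexp x hSx hS R with hbig | hge
      · exact hbig
      · exact absurd (hge.trans (hcard _)) (not_le.mpr hpowR)
    have hint : (ExpanderAux.iball G S ⟨p, hp⟩ R ∩ ExpanderAux.iball G S ⟨q, hq⟩ R).Nonempty := by
      rw [← Set.not_disjoint_iff_nonempty_inter]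
      intro hdisj
      have hu := Set.ncard_union_eq hdisj (Set.toFinite _) (Set.toFinite _)
      have h1 := hball ⟨p, hp⟩ hSp
      have h2 := hball ⟨q, hq⟩ hSq
      have h3 := hcard (ExpanderAux.iball G S ⟨p, hp⟩ R ∪ ExpanderAux.iball G S ⟨q, hq⟩ R)
      rw [hu] at h3
      push_cast at h3
      linarith
    obtain ⟨z, ⟨w1, hw1⟩, ⟨w2, hw2⟩⟩ := hint
    have hreach : (G.induce {v : V | v ∉ S}).Reachable ⟨p, hp⟩ ⟨q, hq⟩ :=
      ⟨w1.append w2.reverse⟩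
    have hdist : (G.induce {v : V | v ∉ S}).dist ⟨p, hp⟩ ⟨q, hq⟩ ≤ 2 * R := by
      have := SimpleGraph.dist_le (w1.append w2.reverse)
      rw [SimpleGraph.Walk.length_append, SimpleGraph.Walk.length_reverse] at this
      omega
    have hRle : (R : ℝ) ≤ Real.log n / L + 1 := by
      have := Nat.floor_le (div_nonneg (Real.log_nonneg hn1) hL0.le)
      rw [hRdef]
      push_cast
      linarith
    first
    | exact hreach
    | { rw [mul_div_assoc]
        have : (((G.induce {v : V | v ∉ S}).dist ⟨p, hp⟩ ⟨q, hq⟩ : ℕ) : ℝ) ≤ 2 * R := by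
          exact_mod_cast hdist
        linarith }
  }
end
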